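/- Let F be a family of [m×n,k]_q matrix codes of minimum rank distance ≥ d and let t < d/2. Let C_s ⊕ A be a random AddRemove code (C_s a subcode of codimension ℓ_s of a random code in F, A random of dimension ℓ_a with trivial intersection), let (B_i)_{i=1}^{mn−k+ℓ_s−ℓ_a} be a random basis of its dual, and let X, Y be independent uniform on the rank-metric ball B_t of radius t. Then P[(tr(X B_i^⊤))_i = (tr(Y B_i^⊤))_i] = (1/q^{mn−k+ℓ_s−ℓ_a}) · (1 + O(q^{mn−k+ℓ_s−ℓ_a}/#B_t)). -/

import Mathlib

open Matrix

def dualCode {K : Type*} [Field K] {m n : ℕ}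
    (W : Submodule K (Matrix (Fin m) (Fin n) K)) :
    Submodule K (Matrix (Fin m) (Fin n) K) where
  carrier := {B | ∀ C ∈ W, Matrix.trace (C * Bᵀ) = 0}
  add_mem' := by
    intro a b ha hb C hC
    simp [Matrix.transpose_add, Matrix.mul_add, ha C hC, hb C hC]
  zero_mem' := by intro C hC; simp
  smul_mem' := by
    intro c a ha C hC
    simp [Matrix.transpose_smul, Matrix.mul_smul, ha C hC]

section aux
variable {K : Type*} [Field K] {m n : ℕ}

lemma trace_mul_transpose_eq (A B : Matrix (Fin m) (Fin n) K) :
    Matrix.trace (A * Bᵀ) = ∑ i, ∑ j, A i j * B i j := by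
  simp [Matrix.trace, Matrix.mul_apply, Matrix.diag]

noncomputable def trForm (K : Type*) [Field K] (m n : ℕ) :
    LinearMap.BilinForm K (Matrix (Fin m) (Fin n) K) :=
  LinearMap.mk₂ K (fun A B => Matrix.trace (A * Bᵀ))
    (by intro A A' B; simp [Matrix.add_mul])
    (by intro c A B; simp [Matrix.smul_mul])
    (by intro A B B'; simp [Matrix.mul_add])
    (by intro c A B; simp [Matrix.mul_smul])

lemma trForm_apply (A B : Matrix (Fin m) (Fin n) K) :
    trForm K m n A B = Matrix.trace (A * Bᵀ) := rfl

lemma trForm_symm (A B : Matrix (Fin m) (Fin n) K) :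
    trForm K m n A B = trForm K m n B A := by
  simp only [trForm_apply, trace_mul_transpose_eq]
  exact Finset.sum_congr rfl fun i _ => Finset.sum_congr rfl fun j _ => mul_comm _ _

lemma trForm_nondeg : (trForm K m n).Nondegenerate := by
  suffices hL : LinearMap.SeparatingLeft (trForm K m n) from
    ⟨hL, fun A hA => hL A fun B => by rw [trForm_symm]; exact hA B⟩
  intro A hA
  ext i j
  have := hA (Matrix.single i j 1)
  rw [trForm_apply, trace_mul_transpose_eq] at this
  rw [Finset.sum_eq_single i, Finset.sum_eq_single j] at this
  · simpa [Matrix.single] using this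
  · intro b _ hb; simp [Matrix.single, hb.symm]
  · intro h; exact absurd (Finset.mem_univ j) h
  · intro b _ hb
    apply Finset.sum_eq_zero
    intro c _; simp [Matrix.single, hb.symm]
  · intro h; exact absurd (Finset.mem_univ i) h

lemma trForm_refl : (trForm K m n).IsRefl := by
  intro A B h; rw [trForm_symm]; exact h

lemma dualCode_eq_orthogonal (W : Submodule K (Matrix (Fin m) (Fin n) K)) :
    dualCode W = (trForm K m n).orthogonal W := rfl

lemma mem_of_forall_dualCode (W : Submodule K (Matrix (Fin m) (Fin n) K))
    (Z : Matrix (Fin m) (Fin n) K)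
    (h : ∀ B ∈ dualCode W, Matrix.trace (Z * Bᵀ) = 0) : Z ∈ W := by
  have hZ : Z ∈ (trForm K m n).orthogonal ((trForm K m n).orthogonal W) := by
    intro B hB
    have := h B (by rw [dualCode_eq_orthogonal]; exact hB)
    rw [trForm_symm]
    exact this
  rwa [LinearMap.BilinForm.orthogonal_orthogonal trForm_nondeg trForm_refl] at hZ

end aux

variable {K : Type*} [Field K]

/-- a linear equiv sending a given nonzero vector to another -/
lemma exists_linearEquiv_map_eq {V : Type*} [AddCommGroup V] [Module K V]
    [FiniteDimensional K V] (v w : V) (hv : v ≠ 0) (hw : w ≠ 0) :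
    ∃ f : V ≃ₗ[K] V, f v = w := by
  obtain ⟨U, hU⟩ := (Submodule.span K {v}).exists_isCompl
  obtain ⟨U', hU'⟩ := (Submodule.span K {w}).exists_isCompl
  set e1 : (Submodule.span K {v} : Submodule K V) ≃ₗ[K] Submodule.span K {w} :=
    (LinearEquiv.toSpanNonzeroSingleton K V v hv).symm.trans
      (LinearEquiv.toSpanNonzeroSingleton K V w hw) with he1def
  have hrank : Module.finrank K U = Module.finrank K U' := by
    have h1 := Submodule.finrank_add_eq_of_isCompl hU
    have h2 := Submodule.finrank_add_eq_of_isCompl hU'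
    have h3 : Module.finrank K (Submodule.span K {v}) =
        Module.finrank K (Submodule.span K {w}) := e1.finrank_eq
    omega
  have e2 : U ≃ₗ[K] U' := LinearEquiv.ofFinrankEq _ _ hrank
  refine ⟨(Submodule.prodEquivOfIsCompl _ _ hU).symm.trans
    ((e1.prodCongr e2).trans (Submodule.prodEquivOfIsCompl _ _ hU')), ?_⟩
  have hv' : (Submodule.prodEquivOfIsCompl _ _ hU)
      (⟨⟨v, Submodule.mem_span_singleton_self v⟩, 0⟩) = v := by
    simp [Submodule.coe_prodEquivOfIsCompl']
  have he1 : e1 ⟨v, Submodule.mem_span_singleton_self v⟩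
      = ⟨w, Submodule.mem_span_singleton_self w⟩ := by
    have : (LinearEquiv.toSpanNonzeroSingleton K V v hv).symm
        ⟨v, Submodule.mem_span_singleton_self v⟩ = 1 := by
      rw [LinearEquiv.symm_apply_eq]
      exact (LinearEquiv.toSpanNonzeroSingleton_one K V v hv).symm
    simp only [he1def, LinearEquiv.trans_apply, this]
    exact LinearEquiv.toSpanNonzeroSingleton_one K V w hw
  have hsymm : ((Submodule.span K {v}).prodEquivOfIsCompl U hU).symm v
      = ⟨⟨v, Submodule.mem_span_singleton_self v⟩, 0⟩ := by
    rw [LinearEquiv.symm_apply_eq]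
    exact hv'.symm
  simp only [LinearEquiv.trans_apply, hsymm, LinearEquiv.prodCongr_apply, he1, map_zero]
  simp [Submodule.coe_prodEquivOfIsCompl']

lemma exists_unit_vecMul_eq {M : ℕ} (v w : Fin M → K) (hv : v ≠ 0) (hw : w ≠ 0) :
    ∃ T : (Matrix (Fin M) (Fin M) K)ˣ, v ᵥ* (T : Matrix (Fin M) (Fin M) K) = w := by
  obtain ⟨f, hf⟩ := exists_linearEquiv_map_eq (K := K) (V := Fin M → K) v w hv hw
  refine ⟨⟨(LinearMap.toMatrix' (f : (Fin M → K) →ₗ[K] (Fin M → K)))ᵀ,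
    (LinearMap.toMatrix' (f.symm : (Fin M → K) →ₗ[K] (Fin M → K)))ᵀ, ?_, ?_⟩, ?_⟩
  · rw [← Matrix.transpose_mul, ← LinearMap.toMatrix'_comp]
    rw [show ((f.symm : (Fin M → K) →ₗ[K] (Fin M → K)).comp (f : (Fin M → K) →ₗ[K] (Fin M → K)))
      = LinearMap.id from by ext x; simp]
    rw [LinearMap.toMatrix'_id, Matrix.transpose_one]
  · rw [← Matrix.transpose_mul, ← LinearMap.toMatrix'_comp]
    rw [show ((f : (Fin M → K) →ₗ[K] (Fin M → K)).comp (f.symm : (Fin M → K) →ₗ[K] (Fin M → K)))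
      = LinearMap.id from by ext x; simp]
    rw [LinearMap.toMatrix'_id, Matrix.transpose_one]
  · show v ᵥ* (LinearMap.toMatrix' (f : (Fin M → K) →ₗ[K] (Fin M → K)))ᵀ = w
    rw [Matrix.vecMul_transpose, ← Matrix.toLin'_apply, Matrix.toLin'_toMatrix']
    exact hf

lemma vecMul_unit_cancel {M : ℕ} [Fintype K] [DecidableEq K] (u : Fin M → K)
    (T : (Matrix (Fin M) (Fin M) K)ˣ) :
    (u ᵥ* (T : Matrix (Fin M) (Fin M) K)) ᵥ* ((T⁻¹ : (Matrix (Fin M) (Fin M) K)ˣ) :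
      Matrix (Fin M) (Fin M) K) = u := by
  rw [Matrix.vecMul_vecMul, Units.mul_inv, Matrix.vecMul_one]

lemma vecMul_unit_ne_zero {M : ℕ} [Fintype K] [DecidableEq K] (v : Fin M → K) (hv : v ≠ 0)
    (T : (Matrix (Fin M) (Fin M) K)ˣ) : v ᵥ* (T : Matrix (Fin M) (Fin M) K) ≠ 0 := by
  intro h
  apply hv
  rw [← vecMul_unit_cancel v T, h, Matrix.zero_vecMul]

lemma fib_card_eq {M : ℕ} [Fintype K] [DecidableEq K] (v : Fin M → K) (hv : v ≠ 0)
    (w w' : Fin M → K) (hw : w ≠ 0) (hw' : w' ≠ 0) :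
    (Finset.univ.filter fun T : (Matrix (Fin M) (Fin M) K)ˣ =>
        v ᵥ* (T : Matrix (Fin M) (Fin M) K) = w).card =
    (Finset.univ.filter fun T : (Matrix (Fin M) (Fin M) K)ˣ =>
        v ᵥ* (T : Matrix (Fin M) (Fin M) K) = w').card := by
  obtain ⟨Tw, hTw⟩ := exists_unit_vecMul_eq v w hv hw
  obtain ⟨Tw', hTw'⟩ := exists_unit_vecMul_eq v w' hv hw'
  apply Finset.card_bij (fun T _ => T * (Tw⁻¹ * Tw'))
  · intro T hT
    simp only [Finset.mem_filter, Finset.mem_univ, true_and] at hT ⊢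
    rw [Units.val_mul, ← Matrix.vecMul_vecMul, hT, Units.val_mul, ← Matrix.vecMul_vecMul,
      ← hTw, vecMul_unit_cancel, hTw']
  · intro T₁ _ T₂ _ h
    exact mul_right_cancel h
  · intro T hT
    simp only [Finset.mem_filter, Finset.mem_univ, true_and] at hT
    refine ⟨T * (Tw'⁻¹ * Tw), ?_, by group⟩
    simp only [Finset.mem_filter, Finset.mem_univ, true_and]
    rw [Units.val_mul, ← Matrix.vecMul_vecMul, hT, Units.val_mul, ← Matrix.vecMul_vecMul,
      ← hTw', vecMul_unit_cancel, hTw]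

lemma count_vecMul {M : ℕ} [Fintype K] [DecidableEq K] (v : Fin M → K) (hv : v ≠ 0)
    (P : (Fin M → K) → Prop) [DecidablePred P] :
    (Finset.univ.filter fun T : (Matrix (Fin M) (Fin M) K)ˣ =>
        P (v ᵥ* (T : Matrix (Fin M) (Fin M) K))).card
      * (Finset.univ.filter fun w : Fin M → K => w ≠ 0).card =
    Fintype.card (Matrix (Fin M) (Fin M) K)ˣ
      * (Finset.univ.filter fun w : Fin M → K => P w ∧ w ≠ 0).card := by
  classical
  set s := (Finset.univ.filter fun T : (Matrix (Fin M) (Fin M) K)ˣ =>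
    v ᵥ* (T : Matrix (Fin M) (Fin M) K) = v).card with hs
  have key : ∀ (Q : (Fin M → K) → Prop) [DecidablePred Q],
      (Finset.univ.filter fun T : (Matrix (Fin M) (Fin M) K)ˣ =>
        Q (v ᵥ* (T : Matrix (Fin M) (Fin M) K))).card
      = (Finset.univ.filter fun w : Fin M → K => Q w ∧ w ≠ 0).card * s := by
    intro Q _
    rw [Finset.card_eq_sum_card_fiberwise
      (f := fun T : (Matrix (Fin M) (Fin M) K)ˣ => v ᵥ* (T : Matrix (Fin M) (Fin M) K))
      (t := Finset.univ.filter fun w : Fin M → K => Q w ∧ w ≠ 0)]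
    · rw [Finset.sum_congr rfl (fun w hw => ?_), Finset.sum_const, smul_eq_mul]
      simp only [Finset.mem_filter, Finset.mem_univ, true_and] at hw
      rw [Finset.filter_filter]
      rw [Finset.filter_congr (fun (T : (Matrix (Fin M) (Fin M) K)ˣ) _ =>
        (show Q (v ᵥ* (T : Matrix (Fin M) (Fin M) K)) ∧ v ᵥ* (T : Matrix (Fin M) (Fin M) K) = w
          ↔ v ᵥ* (T : Matrix (Fin M) (Fin M) K) = w from
          ⟨And.right, fun h => ⟨h ▸ hw.1, h⟩⟩))]
      exact fib_card_eq v hv w v hw.2 hv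
    · intro T hT
      simp only [Finset.mem_filter, Finset.mem_univ, true_and] at hT ⊢
      exact Finset.mem_filter.mpr ⟨Finset.mem_univ _, (Finset.mem_filter.mp hT).2, vecMul_unit_ne_zero v hv T⟩
  have h1 := key P
  have h2 := key (fun _ => True)
  simp only [true_and] at h2
  rw [show (Finset.univ.filter fun T : (Matrix (Fin M) (Fin M) K)ˣ => True) = Finset.univ
    from Finset.filter_true_of_mem fun _ _ => trivial, Finset.card_univ] at h2
  rw [h1, h2]
  ring

variable {K : Type*} [Field K]

lemma card_filter_vanish_prefix {M N : ℕ} [Fintype K] [DecidableEq K] (h : N ≤ M) :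
    (Finset.univ.filter fun w : Fin M → K =>
      ∀ i : Fin N, w (Fin.castLE h i) = 0).card = Fintype.card K ^ (M - N) := by
  rw [← Fintype.card_subtype]
  have e : {w : Fin M → K // ∀ i : Fin N, w (Fin.castLE h i) = 0} ≃ (Fin (M - N) → K) :=
    { toFun := fun w j => w.1 ⟨N + j, by omega⟩
      invFun := fun u => ⟨fun j => if hj : (j : ℕ) < N then 0 else u ⟨(j : ℕ) - N, by omega⟩,
        by intro i; simp [Fin.castLE, i.isLt]⟩
      left_inv := by
        intro ⟨w, hw⟩
        ext j
        by_cases hj : (j : ℕ) < N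
        · simp only [hj, dif_pos]
          exact (hw ⟨j, hj⟩).symm
        · simp only [hj, dif_neg, not_false_iff]
          congr 1
          ext
          simp
          omega
      right_inv := by
        intro u
        ext j
        have : ¬ (N + (j : ℕ) < N) := by omega
        simp only [this, dif_neg, not_false_iff]
        congr 1
        ext
        simp }
  rw [Fintype.card_congr e, Fintype.card_fun, Fintype.card_fin]

lemma matrix_rank_sub_le {m n : ℕ} (A B : Matrix (Fin m) (Fin n) K) :
    (A - B).rank ≤ A.rank + B.rank := by
  classical
  have hr : LinearMap.range (A - B).mulVecLin ≤
      LinearMap.range A.mulVecLin ⊔ LinearMap.range B.mulVecLin := by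
    rintro y ⟨x, rfl⟩
    rw [Matrix.mulVecLin_apply, Matrix.sub_mulVec]
    exact Submodule.sub_mem _
      (Submodule.mem_sup_left ⟨x, by rw [Matrix.mulVecLin_apply]⟩)
      (Submodule.mem_sup_right ⟨x, by rw [Matrix.mulVecLin_apply]⟩)
  calc (A - B).rank = Module.finrank K (LinearMap.range (A - B).mulVecLin) := rfl
    _ ≤ Module.finrank K ↥(LinearMap.range A.mulVecLin ⊔ LinearMap.range B.mulVecLin) :=
        Submodule.finrank_mono hr
    _ ≤ A.rank + B.rank := Submodule.finrank_add_le_finrank_add_finrank _ _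

lemma sphere_packing {m n k d t : ℕ} [Fintype K] [DecidableEq K]
    (C : Submodule K (Matrix (Fin m) (Fin n) K))
    (hk : Module.finrank K C = k) (hd : ∀ X ∈ C, X ≠ 0 → d ≤ X.rank)
    (ht : 2 * t < d) (hkmn : k ≤ m * n) :
    Fintype.card {X : Matrix (Fin m) (Fin n) K // X.rank ≤ t} ≤ Fintype.card K ^ (m * n - k) := by
  classical
  set q := Fintype.card K
  have hq : 0 < q := Fintype.card_pos
  have hinj : Function.Injective
      (fun xc : {X : Matrix (Fin m) (Fin n) K // X.rank ≤ t} × C => xc.1.1 + xc.2.1) := by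
    rintro ⟨⟨x, hx⟩, ⟨c, hc⟩⟩ ⟨⟨x', hx'⟩, ⟨c', hc'⟩⟩ hsum
    simp only at hsum
    have hcc : c - c' = x' - x := by
      apply sub_eq_sub_iff_add_eq_add.mpr
      rw [add_comm c x]
      exact hsum
    have hmem : c - c' ∈ C := Submodule.sub_mem C hc hc'
    have hrank : (c - c').rank ≤ 2 * t := by
      rw [hcc]
      calc (x' - x).rank ≤ x'.rank + x.rank := matrix_rank_sub_le x' x
        _ ≤ 2 * t := by omega
    have hzero : c - c' = 0 := by
      by_contra hne
      have := hd _ hmem hne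
      omega
    have hc0 : c = c' := by rwa [sub_eq_zero] at hzero
    have hx0 : x = x' := by
      have := hsum
      rw [hc0] at this
      exact add_right_cancel this
    simp [hx0, hc0]
  have hcard := Fintype.card_le_of_injective _ hinj
  rw [Fintype.card_prod] at hcard
  have hC : Fintype.card C = q ^ k := by
    rw [Module.card_fintype (Module.finBasis K C), Fintype.card_fin, hk]
  have hMat : Fintype.card (Matrix (Fin m) (Fin n) K) = q ^ (m * n) := by
    rw [Fintype.card_eq_nat_card]; simp [Matrix, Nat.card_fun]
    ring
  rw [hC, hMat] at hcard
  have hsplit : q ^ (m * n) = q ^ (m * n - k) * q ^ k := by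
    rw [← pow_add]
    congr 1
    omega
  rw [hsplit] at hcard
  exact Nat.le_of_mul_le_mul_right hcard (pow_pos hq k)

section mainaux
variable {K : Type*} [Field K]

/-- right action of a matrix on a tuple of matrices -/
noncomputable def applyT {m n M : ℕ} (T : Matrix (Fin M) (Fin M) K)
    (δ : Fin M → Matrix (Fin m) (Fin n) K) : Fin M → Matrix (Fin m) (Fin n) K :=
  fun j => ∑ i, T i j • δ i

lemma applyT_applyT {m n M : ℕ} (S T : Matrix (Fin M) (Fin M) K)
    (δ : Fin M → Matrix (Fin m) (Fin n) K) :
    applyT T (applyT S δ) = applyT (S * T) δ := by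
  funext j
  simp only [applyT, Finset.smul_sum, smul_smul, Matrix.mul_apply, Finset.sum_smul]
  rw [Finset.sum_comm]
  refine Finset.sum_congr rfl fun l _ => Finset.sum_congr rfl fun i _ => ?_
  rw [mul_comm]

lemma applyT_one {m n M : ℕ} (δ : Fin M → Matrix (Fin m) (Fin n) K) :
    applyT (1 : Matrix (Fin M) (Fin M) K) δ = δ := by
  funext j
  simp [applyT, Matrix.one_apply, ite_smul]

/-- the equivalence induced by a unit -/
noncomputable def applyTEquiv {m n M : ℕ} (T : (Matrix (Fin M) (Fin M) K)ˣ) :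
    (Fin M → Matrix (Fin m) (Fin n) K) ≃ (Fin M → Matrix (Fin m) (Fin n) K) where
  toFun := applyT (T : Matrix (Fin M) (Fin M) K)
  invFun := applyT ((T⁻¹ : (Matrix (Fin M) (Fin M) K)ˣ) : Matrix (Fin M) (Fin M) K)
  left_inv := by intro δ; rw [applyT_applyT, Units.mul_inv, applyT_one]
  right_inv := by intro δ; rw [applyT_applyT, Units.inv_mul, applyT_one]

lemma trace_applyT {m n M : ℕ} (Z : Matrix (Fin m) (Fin n) K)
    (T : Matrix (Fin M) (Fin M) K) (δ : Fin M → Matrix (Fin m) (Fin n) K) (j : Fin M) :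
    Matrix.trace (Z * ((applyT T δ) j)ᵀ)
      = ((fun i => Matrix.trace (Z * (δ i)ᵀ)) ᵥ* T) j := by
  have h0 : Matrix.trace (Z * ((applyT T δ) j)ᵀ) = trForm K m n Z ((applyT T δ) j) := rfl
  rw [h0]
  show trForm K m n Z (∑ i, T i j • δ i) = _
  rw [map_sum]
  simp only [_root_.map_smul, smul_eq_mul]
  simp only [Matrix.vecMul, dotProduct]
  refine Finset.sum_congr rfl fun i _ => ?_
  rw [mul_comm]
  rfl

/-- The key collision lemma: averaged over the GL-invariant distribution, the
probability that the partial syndrome of a fixed matrix `Z` (nonzero on the support)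
vanishes is exactly `(q^ℓa - 1)/(q^M - 1)`. -/
lemma keyB {m n M ℓa : ℕ} [Fintype K] [DecidableEq K]
    (p : (Fin M → Matrix (Fin m) (Fin n) K) → ℝ)
    (hp1 : ∑ δ, p δ = 1)
    (hinv : ∀ T : Matrix (Fin M) (Fin M) K, IsUnit T.det →
      ∀ δ, p (fun j => ∑ i, T i j • δ i) = p δ)
    (hℓa : ℓa ≤ M)
    (Z : Matrix (Fin m) (Fin n) K)
    (hvne : ∀ δ, p δ ≠ 0 → (fun j => Matrix.trace (Z * (δ j)ᵀ)) ≠ 0) :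
    1 ≤ M ∧
    ∑ δ, p δ * (if (∀ i : Fin (M - ℓa),
          Matrix.trace (Z * (δ (Fin.castLE (Nat.sub_le M ℓa) i))ᵀ) = 0) then (1:ℝ) else 0)
      = ((Fintype.card K : ℝ) ^ ℓa - 1) / ((Fintype.card K : ℝ) ^ M - 1) := by
  classical
  set qK := Fintype.card K with hqK
  have hq2 : 2 ≤ qK := Fintype.one_lt_card
  -- support is nonempty
  obtain ⟨δ₀, hδ₀⟩ : ∃ δ₀, p δ₀ ≠ 0 := by
    by_contra h
    push_neg at h
    rw [Finset.sum_congr rfl fun δ _ => h δ] at hp1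
    simp at hp1
  have hM1 : 1 ≤ M := by
    by_contra hM
    push_neg at hM
    interval_cases M
    exact hvne δ₀ hδ₀ (funext fun j => absurd j.isLt (by omega))
  refine ⟨hM1, ?_⟩
  -- the syndrome vector
  set v : (Fin M → Matrix (Fin m) (Fin n) K) → (Fin M → K) :=
    fun δ j => Matrix.trace (Z * (δ j)ᵀ) with hv
  -- the prefix-vanishing condition
  set P : (Fin M → K) → Prop :=
    fun w => ∀ i : Fin (M - ℓa), w (Fin.castLE (Nat.sub_le M ℓa) i) = 0 with hPdef
  set E : ℝ := ∑ δ, p δ * (if P (v δ) then (1:ℝ) else 0) with hE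
  show E = _
  -- per-unit identity
  have hET : ∀ T : (Matrix (Fin M) (Fin M) K)ˣ,
      E = ∑ δ, p δ * (if P ((v δ) ᵥ* (T : Matrix (Fin M) (Fin M) K)) then (1:ℝ) else 0) := by
    intro T
    rw [hE, ← Equiv.sum_comp (applyTEquiv T)
      (fun δ => p δ * (if P (v δ) then (1:ℝ) else 0))]
    refine Finset.sum_congr rfl fun δ _ => ?_
    have h1 : p (applyTEquiv T δ) = p δ := by
      have := hinv (T : Matrix (Fin M) (Fin M) K)
        ((Matrix.isUnit_iff_isUnit_det _).mp T.isUnit) δ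
      exact this
    have h2 : v (applyTEquiv T δ) = (v δ) ᵥ* (T : Matrix (Fin M) (Fin M) K) := by
      funext j
      exact trace_applyT Z (T : Matrix (Fin M) (Fin M) K) δ j
    rw [show ((applyTEquiv T) δ) = applyT (T : Matrix (Fin M) (Fin M) K) δ from rfl] at h1 h2 ⊢
    rw [h1, h2]
  -- sum over all units
  set g := Fintype.card (Matrix (Fin M) (Fin M) K)ˣ with hg
  have hg0 : 0 < g := Fintype.card_pos
  have hsum : (g : ℝ) * E = ∑ δ, p δ *
      ((Finset.univ.filter fun T : (Matrix (Fin M) (Fin M) K)ˣ =>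
        P ((v δ) ᵥ* (T : Matrix (Fin M) (Fin M) K))).card : ℝ) := by
    have : (g : ℝ) * E = ∑ T : (Matrix (Fin M) (Fin M) K)ˣ,
        ∑ δ, p δ * (if P ((v δ) ᵥ* (T : Matrix (Fin M) (Fin M) K)) then (1:ℝ) else 0) := by
      rw [Finset.sum_congr rfl fun T _ => (hET T).symm, Finset.sum_const, Finset.card_univ,
        nsmul_eq_mul, hg]
    rw [this, Finset.sum_comm]
    refine Finset.sum_congr rfl fun δ _ => ?_
    rw [← Finset.mul_sum]
    congr 1
    rw [Finset.sum_boole]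
  -- counting
  have hA : (Finset.univ.filter fun w : Fin M → K => w ≠ 0).card = qK ^ M - 1 := by
    rw [Finset.filter_ne' Finset.univ 0, Finset.card_erase_of_mem (Finset.mem_univ 0),
      Finset.card_univ, Fintype.card_fun, Fintype.card_fin]
  have hB : (Finset.univ.filter fun w : Fin M → K => P w ∧ w ≠ 0).card = qK ^ ℓa - 1 := by
    rw [← Finset.filter_filter, Finset.filter_ne' _ 0,
      Finset.card_erase_of_mem, card_filter_vanish_prefix (Nat.sub_le M ℓa)]
    · rw [show M - (M - ℓa) = ℓa from by omega]
    · refine Finset.mem_filter.mpr ⟨Finset.mem_univ 0, fun i => rfl⟩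
  have hcnt : ∀ δ, p δ ≠ 0 →
      ((Finset.univ.filter fun T : (Matrix (Fin M) (Fin M) K)ˣ =>
        P ((v δ) ᵥ* (T : Matrix (Fin M) (Fin M) K))).card) * (qK ^ M - 1)
      = g * (qK ^ ℓa - 1) := by
    intro δ hδ
    have := count_vecMul (v δ) (hvne δ hδ) P
    rwa [hA, hB] at this
  -- conclude
  have hQM : (1:ℕ) ≤ qK ^ M := Nat.one_le_pow _ _ (by omega)
  have hQM' : (1:ℝ) < (qK:ℝ) ^ M := by
    have : (2:ℝ) ≤ (qK:ℝ) := by exact_mod_cast hq2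
    calc (1:ℝ) < 2 := one_lt_two
      _ ≤ (qK:ℝ) := this
      _ = (qK:ℝ)^1 := (pow_one _).symm
      _ ≤ (qK:ℝ)^M := pow_le_pow_right₀ (by linarith) hM1
  have hfinal : (g : ℝ) * E * ((qK:ℝ) ^ M - 1) = (g:ℝ) * ((qK:ℝ) ^ ℓa - 1) := by
    rw [hsum, Finset.sum_mul]
    have : ∀ δ ∈ (Finset.univ : Finset (Fin M → Matrix (Fin m) (Fin n) K)),
        p δ * ((Finset.univ.filter fun T : (Matrix (Fin M) (Fin M) K)ˣ =>
          P ((v δ) ᵥ* (T : Matrix (Fin M) (Fin M) K))).card : ℝ) * ((qK:ℝ) ^ M - 1)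
        = p δ * ((g:ℝ) * ((qK:ℝ) ^ ℓa - 1)) := by
      intro δ _
      by_cases hδ : p δ = 0
      · rw [hδ]; ring
      · have h := hcnt δ hδ
        have hcast : ((Finset.univ.filter fun T : (Matrix (Fin M) (Fin M) K)ˣ =>
            P ((v δ) ᵥ* (T : Matrix (Fin M) (Fin M) K))).card : ℝ) * ((qK:ℝ) ^ M - 1)
            = (g:ℝ) * ((qK:ℝ) ^ ℓa - 1) := by
          have h1 : ((qK:ℝ) ^ M - 1) = ((qK ^ M - 1 : ℕ) : ℝ) := by
            rw [Nat.cast_sub hQM]; push_cast; ring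
          have h2 : ((qK:ℝ) ^ ℓa - 1) = ((qK ^ ℓa - 1 : ℕ) : ℝ) := by
            rw [Nat.cast_sub (Nat.one_le_pow _ _ (by omega))]; push_cast; ring
          rw [h1, h2, ← Nat.cast_mul, ← Nat.cast_mul, h]
        rw [mul_assoc, hcast]
    rw [Finset.sum_congr rfl this, ← Finset.sum_mul, hp1, one_mul]
  have hgne : (g:ℝ) ≠ 0 := by positivity
  have hQne : (qK:ℝ) ^ M - 1 ≠ 0 := by linarith
  have hassoc : (g:ℝ) * (E * ((qK:ℝ) ^ M - 1)) = (g:ℝ) * ((qK:ℝ) ^ ℓa - 1) := by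
    rw [← mul_assoc]; exact hfinal
  have hEq := mul_left_cancel₀ hgne hassoc
  rw [eq_div_iff hQne]
  exact hEq

set_option maxHeartbeats 1600000 in
theorem stmt_13 :
    ∃ c : ℝ, 0 < c ∧
      ∀ (K : Type) [Field K] [Fintype K] [DecidableEq K],
      ∀ (q m n k ℓs ℓa d t : ℕ), q = Fintype.card K → 2 * t < d →
      ℓs ≤ k → k ≤ m * n → ℓa ≤ m * n - k + ℓs →
      ∀ (F : Set (Submodule K (Matrix (Fin m) (Fin n) K))),
      (∀ C ∈ F, Module.finrank K C = k) →
      (∀ C ∈ F, ∀ X ∈ C, X ≠ 0 → d ≤ X.rank) →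
      ∀ (p : (Fin (m * n - k + ℓs) → Matrix (Fin m) (Fin n) K) → ℝ),
      (∀ δ, 0 ≤ p δ) → (∑ δ, p δ = 1) →
      (∀ δ, p δ ≠ 0 → ∃ C ∈ F, ∃ Cs : Submodule K (Matrix (Fin m) (Fin n) K),
        Cs ≤ C ∧ Module.finrank K Cs = k - ℓs ∧ LinearIndependent K δ ∧
        Submodule.span K (Set.range δ) = dualCode Cs) →
      (∀ T : Matrix (Fin (m * n - k + ℓs)) (Fin (m * n - k + ℓs)) K, IsUnit T.det →
        ∀ δ, p (fun j => ∑ i, T i j • δ i) = p δ) →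
      |(∑ δ, p δ *
          ((Nat.card {XY : Matrix (Fin m) (Fin n) K × Matrix (Fin m) (Fin n) K //
              XY.1.rank ≤ t ∧ XY.2.rank ≤ t ∧
              ∀ i : Fin (m * n - k + ℓs - ℓa),
                Matrix.trace (XY.1 * (δ (Fin.castLE (Nat.sub_le _ ℓa) i))ᵀ)
                  = Matrix.trace (XY.2 * (δ (Fin.castLE (Nat.sub_le _ ℓa) i))ᵀ)} : ℝ)
            / ((Nat.card {X : Matrix (Fin m) (Fin n) K // X.rank ≤ t} : ℝ)) ^ 2))
        - 1 / (q : ℝ) ^ (m * n - k + ℓs - ℓa)|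
      ≤ c / (Nat.card {X : Matrix (Fin m) (Fin n) K // X.rank ≤ t} : ℝ) := by
  refine ⟨3, by norm_num, ?_⟩
  intro K _ _ _ q m n k ℓs ℓa d t hqcard hdt hℓsk hkmn hℓa F hFdim hFdist p hp0 hp1 hsupp hinv
  classical
  subst hqcard
  have hq2 : 2 ≤ Fintype.card K := Fintype.one_lt_card
  -- abbreviations (as plain haves about literals)
  -- the ball cardinality
  have hb_eq : Nat.card {X : Matrix (Fin m) (Fin n) K // X.rank ≤ t}
      = (Finset.univ.filter fun X : Matrix (Fin m) (Fin n) K => X.rank ≤ t).card := by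
    rw [Nat.card_eq_fintype_card, Fintype.card_subtype]
  have hb1 : 1 ≤ Nat.card {X : Matrix (Fin m) (Fin n) K // X.rank ≤ t} := by
    rw [hb_eq]
    refine Finset.card_pos.mpr ⟨0, ?_⟩
    simp [Matrix.rank_zero]
  obtain ⟨δ₀, hδ₀⟩ : ∃ δ₀, p δ₀ ≠ 0 := by
    by_contra h
    push_neg at h
    rw [Finset.sum_congr rfl fun δ _ => h δ] at hp1
    simp at hp1
  obtain ⟨C₀, hC₀F, -⟩ := hsupp δ₀ hδ₀
  have hbQ : Nat.card {X : Matrix (Fin m) (Fin n) K // X.rank ≤ t}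
      ≤ Fintype.card K ^ (m * n - k + ℓs) := by
    rw [Nat.card_eq_fintype_card]
    calc Fintype.card {X : Matrix (Fin m) (Fin n) K // X.rank ≤ t}
        ≤ Fintype.card K ^ (m * n - k) :=
          sphere_packing C₀ (hFdim C₀ hC₀F) (hFdist C₀ hC₀F) hdt hkmn
      _ ≤ Fintype.card K ^ (m * n - k + ℓs) := Nat.pow_le_pow_right (by omega) (by omega)
  -- nonvanishing of syndromes of small-rank nonzero matrices on the support
  have hvne : ∀ (Z : Matrix (Fin m) (Fin n) K), Z ≠ 0 → Z.rank ≤ 2 * t →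
      ∀ δ, p δ ≠ 0 → (fun j => Matrix.trace (Z * (δ j)ᵀ)) ≠ 0 := by
    intro Z hZ hZr δ hδ hzero
    obtain ⟨C, hCF, Cs, hCsC, -, -, hspan⟩ := hsupp δ hδ
    have hall : ∀ B ∈ dualCode Cs, Matrix.trace (Z * Bᵀ) = 0 := by
      intro B hB
      rw [← hspan] at hB
      have hsub : Submodule.span K (Set.range δ) ≤ LinearMap.ker (trForm K m n Z) := by
        rw [Submodule.span_le]
        rintro B' ⟨j, rfl⟩
        simp only [SetLike.mem_coe, LinearMap.mem_ker]
        have := congrFun hzero j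
        simpa [trForm_apply] using this
      have := hsub hB
      rwa [LinearMap.mem_ker, trForm_apply] at this
    have hZC : Z ∈ Cs := mem_of_forall_dualCode Cs Z hall
    have := hFdist C hCF Z (hCsC hZC) hZ
    omega
  -- key collision identity
  have keyB' : ∀ X Y : Matrix (Fin m) (Fin n) K, X.rank ≤ t → Y.rank ≤ t → X ≠ Y →
      1 ≤ m * n - k + ℓs ∧
      ∑ δ, p δ * (if (∀ i : Fin (m * n - k + ℓs - ℓa),
            Matrix.trace (X * (δ (Fin.castLE (Nat.sub_le _ ℓa) i))ᵀ)
              = Matrix.trace (Y * (δ (Fin.castLE (Nat.sub_le _ ℓa) i))ᵀ)) then (1:ℝ) else 0)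
        = ((Fintype.card K : ℝ) ^ ℓa - 1) / ((Fintype.card K : ℝ) ^ (m * n - k + ℓs) - 1) := by
    intro X Y hX hY hXY
    have hZ : X - Y ≠ 0 := sub_ne_zero.mpr hXY
    have hZr : (X - Y).rank ≤ 2 * t := by
      have := matrix_rank_sub_le X Y
      omega
    have hiff : ∀ δ : Fin (m * n - k + ℓs) → Matrix (Fin m) (Fin n) K,
        (∀ i : Fin (m * n - k + ℓs - ℓa),
          Matrix.trace (X * (δ (Fin.castLE (Nat.sub_le _ ℓa) i))ᵀ)
            = Matrix.trace (Y * (δ (Fin.castLE (Nat.sub_le _ ℓa) i))ᵀ))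
        ↔ (∀ i : Fin (m * n - k + ℓs - ℓa),
          Matrix.trace ((X - Y) * (δ (Fin.castLE (Nat.sub_le _ ℓa) i))ᵀ) = 0) := by
      intro δ
      refine forall_congr' fun i => ?_
      rw [Matrix.sub_mul, Matrix.trace_sub, sub_eq_zero]
    obtain ⟨h1M, hkey⟩ := keyB p hp1 hinv hℓa (X - Y) (hvne (X - Y) hZ hZr)
    refine ⟨h1M, ?_⟩
    rw [← hkey]
    refine Finset.sum_congr rfl fun δ _ => ?_
    congr 1
    rw [if_congr (hiff δ) rfl rfl]
  -- rewrite each pair-count as a double sum of indicators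
  have hNδ : ∀ δ : Fin (m * n - k + ℓs) → Matrix (Fin m) (Fin n) K,
      ((Nat.card {XY : Matrix (Fin m) (Fin n) K × Matrix (Fin m) (Fin n) K //
          XY.1.rank ≤ t ∧ XY.2.rank ≤ t ∧
          ∀ i : Fin (m * n - k + ℓs - ℓa),
            Matrix.trace (XY.1 * (δ (Fin.castLE (Nat.sub_le _ ℓa) i))ᵀ)
              = Matrix.trace (XY.2 * (δ (Fin.castLE (Nat.sub_le _ ℓa) i))ᵀ)}) : ℝ)
      = ∑ X : Matrix (Fin m) (Fin n) K, ∑ Y : Matrix (Fin m) (Fin n) K,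
          (if (X.rank ≤ t ∧ Y.rank ≤ t ∧ ∀ i : Fin (m * n - k + ℓs - ℓa),
            Matrix.trace (X * (δ (Fin.castLE (Nat.sub_le _ ℓa) i))ᵀ)
              = Matrix.trace (Y * (δ (Fin.castLE (Nat.sub_le _ ℓa) i))ᵀ)) then (1:ℝ) else 0) := by
    intro δ
    rw [Nat.card_eq_fintype_card, Fintype.card_subtype, Finset.card_filter]
    push_cast
    rw [Fintype.sum_prod_type]
  -- the inner average for each pair
  have hJ : ∀ X Y : Matrix (Fin m) (Fin n) K,
      (∑ δ, p δ * (if (X.rank ≤ t ∧ Y.rank ≤ t ∧ ∀ i : Fin (m * n - k + ℓs - ℓa),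
            Matrix.trace (X * (δ (Fin.castLE (Nat.sub_le _ ℓa) i))ᵀ)
              = Matrix.trace (Y * (δ (Fin.castLE (Nat.sub_le _ ℓa) i))ᵀ)) then (1:ℝ) else 0))
      = if X.rank ≤ t ∧ Y.rank ≤ t then (if X = Y then (1:ℝ) else
          ((Fintype.card K : ℝ) ^ ℓa - 1) / ((Fintype.card K : ℝ) ^ (m * n - k + ℓs) - 1))
        else 0 := by
    intro X Y
    by_cases hr : X.rank ≤ t ∧ Y.rank ≤ t
    · rw [if_pos hr]
      by_cases hxy : X = Y
      · rw [if_pos hxy]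
        subst hxy
        rw [Finset.sum_congr rfl fun δ _ => ?_, hp1]
        rw [if_pos ⟨hr.1, hr.2, fun i => rfl⟩, mul_one]
      · rw [if_neg hxy]
        rw [← (keyB' X Y hr.1 hr.2 hxy).2]
        refine Finset.sum_congr rfl fun δ _ => ?_
        congr 1
        rw [if_congr (by tauto) rfl rfl]
    · rw [if_neg hr]
      refine Finset.sum_eq_zero fun δ _ => ?_
      rw [if_neg (by tauto), mul_zero]
  -- auxiliary counting sums
  have hsum_rank : (∑ X : Matrix (Fin m) (Fin n) K, (if X.rank ≤ t then (1:ℝ) else 0))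
      = (Nat.card {X : Matrix (Fin m) (Fin n) K // X.rank ≤ t} : ℝ) := by
    rw [Finset.sum_boole, hb_eq]
  -- the total sum
  have hLHS : (∑ δ, p δ *
      ((Nat.card {XY : Matrix (Fin m) (Fin n) K × Matrix (Fin m) (Fin n) K //
          XY.1.rank ≤ t ∧ XY.2.rank ≤ t ∧
          ∀ i : Fin (m * n - k + ℓs - ℓa),
            Matrix.trace (XY.1 * (δ (Fin.castLE (Nat.sub_le _ ℓa) i))ᵀ)
              = Matrix.trace (XY.2 * (δ (Fin.castLE (Nat.sub_le _ ℓa) i))ᵀ)} : ℝ)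
        / ((Nat.card {X : Matrix (Fin m) (Fin n) K // X.rank ≤ t} : ℝ)) ^ 2))
      = ((Nat.card {X : Matrix (Fin m) (Fin n) K // X.rank ≤ t} : ℝ)
          + ((Nat.card {X : Matrix (Fin m) (Fin n) K // X.rank ≤ t} : ℝ)
              * (Nat.card {X : Matrix (Fin m) (Fin n) K // X.rank ≤ t} : ℝ)
            - (Nat.card {X : Matrix (Fin m) (Fin n) K // X.rank ≤ t} : ℝ))
            * (((Fintype.card K : ℝ) ^ ℓa - 1)
                / ((Fintype.card K : ℝ) ^ (m * n - k + ℓs) - 1)))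
        / ((Nat.card {X : Matrix (Fin m) (Fin n) K // X.rank ≤ t} : ℝ)) ^ 2 := by
    rw [Finset.sum_congr rfl fun δ _ => by rw [hNδ δ, ← mul_div_assoc], ← Finset.sum_div]
    congr 1
    rw [Finset.sum_congr rfl fun δ _ => Finset.mul_sum _ _ _]
    rw [Finset.sum_congr rfl fun δ _ =>
      Finset.sum_congr rfl fun X _ => Finset.mul_sum _ _ _]
    rw [Finset.sum_comm]
    rw [Finset.sum_congr rfl fun X _ => Finset.sum_comm]
    rw [Finset.sum_congr rfl fun X _ => Finset.sum_congr rfl fun Y _ => hJ X Y]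
    -- now a pure counting computation
    have hsplit : ∀ X Y : Matrix (Fin m) (Fin n) K,
        (if X.rank ≤ t ∧ Y.rank ≤ t then (if X = Y then (1:ℝ) else
          ((Fintype.card K : ℝ) ^ ℓa - 1) / ((Fintype.card K : ℝ) ^ (m * n - k + ℓs) - 1))
          else 0)
        = (if X = Y ∧ X.rank ≤ t then (1:ℝ) else 0)
          + ((if X.rank ≤ t then (1:ℝ) else 0) * (if Y.rank ≤ t then (1:ℝ) else 0)
              - (if X = Y ∧ X.rank ≤ t then (1:ℝ) else 0))
            * (((Fintype.card K : ℝ) ^ ℓa - 1)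
                / ((Fintype.card K : ℝ) ^ (m * n - k + ℓs) - 1)) := by
      intro X Y
      by_cases h1 : X.rank ≤ t <;> by_cases h2 : Y.rank ≤ t <;> by_cases h3 : X = Y <;>
        first
          | (simp only [h1, h2, h3, and_self, and_true, true_and, and_false, false_and,
              if_true, if_false, if_pos, if_neg, not_false_iff, ite_true, ite_false] <;> ring)
          | (subst h3; simp_all)
    rw [Finset.sum_congr rfl fun X _ => Finset.sum_congr rfl fun Y _ => hsplit X Y]
    have hD : (∑ X : Matrix (Fin m) (Fin n) K, ∑ Y : Matrix (Fin m) (Fin n) K,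
        (if X = Y ∧ X.rank ≤ t then (1:ℝ) else 0))
        = (Nat.card {X : Matrix (Fin m) (Fin n) K // X.rank ≤ t} : ℝ) := by
      rw [← hsum_rank]
      refine Finset.sum_congr rfl fun X _ => ?_
      rw [Finset.sum_congr rfl fun Y _ => show (if X = Y ∧ X.rank ≤ t then (1:ℝ) else 0)
        = if X = Y then (if X.rank ≤ t then (1:ℝ) else 0) else 0 from by
          by_cases h1 : X = Y <;> by_cases h2 : X.rank ≤ t <;> simp [h1, h2]]
      rw [Finset.sum_ite_eq Finset.univ X (fun _ => if X.rank ≤ t then (1:ℝ) else 0)]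
      simp
    have hR2 : (∑ X : Matrix (Fin m) (Fin n) K, ∑ Y : Matrix (Fin m) (Fin n) K,
        (if X.rank ≤ t then (1:ℝ) else 0) * (if Y.rank ≤ t then (1:ℝ) else 0))
        = (Nat.card {X : Matrix (Fin m) (Fin n) K // X.rank ≤ t} : ℝ)
          * (Nat.card {X : Matrix (Fin m) (Fin n) K // X.rank ≤ t} : ℝ) := by
      rw [Finset.sum_congr rfl fun X _ => by rw [← Finset.mul_sum, hsum_rank]]
      rw [← Finset.sum_mul, hsum_rank]
    simp only [Finset.sum_add_distrib, Finset.sum_sub_distrib, ← Finset.sum_mul]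
    rw [hD, hR2]
  rw [hLHS]
  -- final arithmetic
  set bR : ℝ := (Nat.card {X : Matrix (Fin m) (Fin n) K // X.rank ≤ t} : ℝ) with hbR
  set ρ : ℝ := ((Fintype.card K : ℝ) ^ ℓa - 1)
    / ((Fintype.card K : ℝ) ^ (m * n - k + ℓs) - 1) with hρ
  have hbR1 : (1:ℝ) ≤ bR := by rw [hbR]; exact_mod_cast hb1
  have hbRpos : (0:ℝ) < bR := by linarith
  have hx1 : (1:ℝ) ≤ (Fintype.card K : ℝ) ^ (m * n - k + ℓs - ℓa) :=
    one_le_pow₀ (by exact_mod_cast Nat.one_le_of_lt hq2)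
  have hxpos : (0:ℝ) < (Fintype.card K : ℝ) ^ (m * n - k + ℓs - ℓa) := by linarith
  have hP1 : 1 / (Fintype.card K : ℝ) ^ (m * n - k + ℓs - ℓa) ≤ 1 := by
    rw [div_le_one hxpos]; exact hx1
  have hP0 : 0 < 1 / (Fintype.card K : ℝ) ^ (m * n - k + ℓs - ℓa) := by positivity
  by_cases hb2 : Nat.card {X : Matrix (Fin m) (Fin n) K // X.rank ≤ t} = 1
  · rw [hbR, hb2]
    push_cast
    rw [abs_le]
    constructor <;> [nlinarith; nlinarith]
  · -- there exist two distinct elements of the ball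
    have hbge2 : 2 ≤ Nat.card {X : Matrix (Fin m) (Fin n) K // X.rank ≤ t} := by omega
    obtain ⟨X₀, hX₀, Y₀, hY₀, hXY₀⟩ := Finset.one_lt_card.mp
      (show 1 < (Finset.univ.filter fun X : Matrix (Fin m) (Fin n) K => X.rank ≤ t).card by
        omega)
    simp only [Finset.mem_filter, Finset.mem_univ, true_and] at hX₀ hY₀
    obtain ⟨hM1, -⟩ := keyB' X₀ Y₀ hX₀ hY₀ hXY₀
    -- numeric facts
    have hQ2 : (2:ℝ) ≤ (Fintype.card K : ℝ) ^ (m * n - k + ℓs) := by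
      calc (2:ℝ) = 2 ^ 1 := (pow_one 2).symm
        _ ≤ (Fintype.card K : ℝ) ^ 1 := by
            rw [pow_one, pow_one]; exact_mod_cast hq2
        _ ≤ (Fintype.card K : ℝ) ^ (m * n - k + ℓs) :=
            pow_le_pow_right₀ (by exact_mod_cast Nat.one_le_of_lt hq2) hM1
    have hR1 : (1:ℝ) ≤ (Fintype.card K : ℝ) ^ ℓa :=
      one_le_pow₀ (by exact_mod_cast Nat.one_le_of_lt hq2)
    have hQxR : (Fintype.card K : ℝ) ^ (m * n - k + ℓs)
        = (Fintype.card K : ℝ) ^ (m * n - k + ℓs - ℓa) * (Fintype.card K : ℝ) ^ ℓa := by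
      rw [← pow_add]
      congr 1
      omega
    have hbRQ : bR ≤ (Fintype.card K : ℝ) ^ (m * n - k + ℓs) := by
      rw [hbR]
      exact_mod_cast hbQ
    have hρ0 : 0 ≤ ρ := by
      rw [hρ]
      apply div_nonneg <;> linarith
    have hρP : ρ ≤ 1 / (Fintype.card K : ℝ) ^ (m * n - k + ℓs - ℓa) := by
      rw [hρ, div_le_div_iff₀ (by linarith) hxpos]
      rw [hQxR]
      nlinarith [hx1, hR1]
    have hPρ : 1 / (Fintype.card K : ℝ) ^ (m * n - k + ℓs - ℓa) - ρ ≤ 2 / bR := by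
      have step1 : 1 / (Fintype.card K : ℝ) ^ (m * n - k + ℓs - ℓa) - ρ
          ≤ 1 / ((Fintype.card K : ℝ) ^ (m * n - k + ℓs) - 1) := by
        rw [hρ, sub_le_iff_le_add]
        rw [div_add_div _ _ (by linarith) (by linarith),
          div_le_div_iff₀ hxpos (by nlinarith [hxpos, hQ2])]
        nlinarith [hx1, hR1, hQxR, hxpos]
      have step2 : 1 / ((Fintype.card K : ℝ) ^ (m * n - k + ℓs) - 1)
          ≤ 2 / (Fintype.card K : ℝ) ^ (m * n - k + ℓs) := by
        rw [div_le_div_iff₀ (by linarith) (by linarith)]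
        linarith
      have step3 : 2 / (Fintype.card K : ℝ) ^ (m * n - k + ℓs) ≤ 2 / bR := by
        apply div_le_div_of_nonneg_left (by norm_num) hbRpos hbRQ
      linarith
    have hSP : (bR + (bR * bR - bR) * ρ) / bR ^ 2
          - 1 / (Fintype.card K : ℝ) ^ (m * n - k + ℓs - ℓa)
        = (1 - ρ) / bR
          - (1 / (Fintype.card K : ℝ) ^ (m * n - k + ℓs - ℓa) - ρ) := by
      field_simp
      ring
    rw [hSP, abs_le]
    have h1ρ : 0 ≤ (1 - ρ) / bR := by
      apply div_nonneg _ (le_of_lt hbRpos)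
      nlinarith
    have h1ρ' : (1 - ρ) / bR ≤ 3 / bR := by
      gcongr
      nlinarith
    have h23 : 2 / bR ≤ 3 / bR := by
      gcongr
      norm_num
    constructor
    · linarith
    · linarith
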